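/- With the monomial order of Guo–Sit–Zhang on 𝔐(X) and S = { (⌊⌊w⌋⌋, w), (⌊uv⌋, ⌊v⌋⌊u⌋), (⌊w⌋w, 1), (w⌊w⌋, 1) : w ∈ 𝔐(X), u,v ∈ 𝔐(X)\{1} }, the term-rewriting system Π_S is convergent, and Irr(S) = 𝔐(X) \ Dom(Π_S) is a section of the free group 𝔐(X)/⟨S⟩. -/

import Mathlib

namespace OpMon

/-- Letters of bracketed words: either a variable or a bracketed word. -/
inductive Letter (X : Type) : Type
  | of : X → Letter X
  | br : List (Letter X) → Letter X

/-- The free operated monoid `𝔐(X)`, modeled as lists of letters (free monoid on letters). -/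
abbrev M (X : Type) := List (Letter X)

/-- The operator `⌊ ⌋` on `𝔐(X)`. -/
def L {X : Type} (w : M X) : M X := [Letter.br w]

mutual
  /-- Substitute each variable by a word (letter version). -/
  def bindL {Y Z : Type} : Letter Y → (Y → M Z) → M Z
    | .of y, f => f y
    | .br w, f => [.br (bindW w f)]
  /-- Substitute each variable by a word (word version). -/
  def bindW {Y Z : Type} : M Y → (Y → M Z) → M Z
    | [], _ => []
    | a :: as, f => bindL a f ++ bindW as f
end

mutual
  /-- Count occurrences of variables satisfying `p` (letter version). -/
  def cntL {Y : Type} (p : Y → Bool) : Letter Y → ℕ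
    | .of y => if p y then 1 else 0
    | .br w => cntW p w
  /-- Count occurrences of variables satisfying `p` (word version). -/
  def cntW {Y : Type} (p : Y → Bool) : M Y → ℕ
    | [] => 0
    | a :: as => cntL p a + cntW p as
end

/-- The star letter `⋆`, modeled as `none`. -/
def starW {X : Type} : M (Option X) := [Letter.of none]

/-- `q` is a `⋆`-bracketed word: exactly one occurrence of `⋆`. -/
def IsStar {X : Type} (q : M (Option X)) : Prop :=
  cntW (fun o => o.isNone) q = 1

/-- Substitution `q|_u` of `u` for `⋆`. -/
def sub {X : Type} (q : M (Option X)) (u : M X) : M X :=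
  bindW q (fun o => Option.elim o u (fun x => [Letter.of x]))

/-- Embed `𝔐(X)` into `𝔐(X ∪ {⋆})`. -/
def emb {X : Type} (w : M X) : M (Option X) :=
  bindW w (fun x => [Letter.of (some x)])

/-- Substitute a `⋆`-word `r` for the `⋆` of `q`, yielding a word on `X ∪ {⋆}`. -/
def subS {X : Type} (q r : M (Option X)) : M (Option X) :=
  bindW q (fun o => Option.elim o r (fun x => [Letter.of (some x)]))

/-- `p` is a `(⋆₁,⋆₂)`-bracketed word (⋆₁ = `none`, ⋆₂ = `some none`). -/
def IsStar2 {X : Type} (p : M (Option (Option X))) : Prop :=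
  cntW (fun o => o.isNone) p = 1 ∧
  cntW (fun o => match o with | some none => true | _ => false) p = 1

/-- Substitution `p|_{u₁,u₂}`. -/
def sub2 {X : Type} (p : M (Option (Option X))) (u₁ u₂ : M X) : M X :=
  bindW p (fun o => match o with
    | none => u₁
    | some none => u₂
    | some (some x) => [Letter.of x])

/-- Substitution `p|_{u₁,⋆₂}`, a `⋆`-word. -/
def sub2L {X : Type} (p : M (Option (Option X))) (u₁ : M X) : M (Option X) :=
  bindW p (fun o => match o with
    | none => emb u₁
    | some none => [Letter.of none]
    | some (some x) => [Letter.of (some x)])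

/-- Substitution `p|_{⋆₁,u₂}`, a `⋆`-word. -/
def sub2R {X : Type} (p : M (Option (Option X))) (u₂ : M X) : M (Option X) :=
  bindW p (fun o => match o with
    | none => [Letter.of none]
    | some none => emb u₂
    | some (some x) => [Letter.of (some x)])

/-- `R^c`. -/
def Rc {X : Type} (R : Set (M X × M X)) : Set (M X × M X) :=
  {p | ∃ q a b, IsStar q ∧ (a, b) ∈ R ∧ p = (sub q a, sub q b)}

/-- Inverse relation `R⁻¹`. -/
def relInv {X : Type} (R : Set (M X × M X)) : Set (M X × M X) :=
  {p | (p.2, p.1) ∈ R}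

/-- Closure under right mult. (C1), left mult. (C2), and the operator (C3). -/
def Closed {X : Type} (S : Set (M X × M X)) : Prop :=
  ∀ a b, (a, b) ∈ S → ∀ c : M X,
    (a ++ c, b ++ c) ∈ S ∧ (c ++ a, c ++ b) ∈ S ∧ (L a, L b) ∈ S

/-- Composition of relations. -/
def relComp {X : Type} (R S : Set (M X × M X)) : Set (M X × M X) :=
  {p | ∃ c, (p.1, c) ∈ R ∧ (c, p.2) ∈ S}

/-- `relPow R n = R^(n+1)`. -/
def relPow {X : Type} (R : Set (M X × M X)) : ℕ → Set (M X × M X)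
  | 0 => R
  | n + 1 => relComp (relPow R n) R

/-- Operated congruence. -/
def IsOpCong {X : Type} (T : Set (M X × M X)) : Prop :=
  (∀ a, (a, a) ∈ T) ∧ (∀ a b, (a, b) ∈ T → (b, a) ∈ T) ∧
  (∀ a b c, (a, b) ∈ T → (b, c) ∈ T → (a, c) ∈ T) ∧ Closed T

/-- The operated congruence `⟨R⟩` generated by `R`. -/
def ocong {X : Type} (R : Set (M X × M X)) : Set (M X × M X) :=
  ⋂₀ {T | IsOpCong T ∧ R ⊆ T}

/-- Equivalence relation (as a set of pairs). -/
def IsEqv {X : Type} (T : Set (M X × M X)) : Prop :=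
  (∀ a, (a, a) ∈ T) ∧ (∀ a b, (a, b) ∈ T → (b, a) ∈ T) ∧
  (∀ a b c, (a, b) ∈ T → (b, c) ∈ T → (a, c) ∈ T)

/-- The equivalence `T^e` generated by `T`. -/
def eqgen {X : Type} (T : Set (M X × M X)) : Set (M X × M X) :=
  ⋂₀ {E | IsEqv E ∧ T ⊆ E}

/-- A monomial order: a well-founded linear order compatible with the operations. -/
def IsMonomialOrder {X : Type} (lt : M X → M X → Prop) : Prop :=
  WellFounded lt ∧
  (∀ a b, a = b ∨ lt a b ∨ lt b a) ∧
  (∀ a b c, lt a b → lt b c → lt a c) ∧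
  (∀ u v w, lt u v → lt (u ++ w) (v ++ w) ∧ lt (w ++ u) (w ++ v) ∧ lt (L u) (L v))

/-- The term-rewriting system `Π_S`. -/
def PiS {X : Type} (lt : M X → M X → Prop) (S : Set (M X × M X)) : Set (M X × M X) :=
  {p | ∃ q t v, IsStar q ∧ ((t, v) ∈ S ∨ (v, t) ∈ S) ∧ lt v t ∧ p = (sub q t, sub q v)}

/-- One-step rewriting. -/
def Rew {X : Type} (lt : M X → M X → Prop) (S : Set (M X × M X)) (a b : M X) : Prop :=
  (a, b) ∈ PiS lt S

/-- Joinability under `Π_S`. -/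
def Joinable {X : Type} (lt : M X → M X → Prop) (S : Set (M X × M X)) (f g : M X) : Prop :=
  ∃ h, Relation.ReflTransGen (Rew lt S) f h ∧ Relation.ReflTransGen (Rew lt S) g h

/-- Termination of `Π_S`. -/
def Terminating {X : Type} (lt : M X → M X → Prop) (S : Set (M X × M X)) : Prop :=
  ¬ ∃ f : ℕ → M X, ∀ n, Rew lt S (f n) (f (n + 1))

/-- Confluence of `Π_S`. -/
def Confluent {X : Type} (lt : M X → M X → Prop) (S : Set (M X × M X)) : Prop :=
  ∀ f g h, Relation.ReflTransGen (Rew lt S) f g → Relation.ReflTransGen (Rew lt S) f h →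
    Joinable lt S g h

/-- Irreducible elements: `𝔐(X) \ Dom(Π_S)`. -/
def Irr {X : Type} (lt : M X → M X → Prop) (S : Set (M X × M X)) : Set (M X) :=
  {f | ∀ g, ¬ Rew lt S f g}

/-- Predecessors of `a`. -/
def Pre {X : Type} (lt : M X → M X → Prop) (S : Set (M X × M X)) (a : M X) : Set (M X) :=
  {f | Relation.ReflTransGen (Rew lt S) f a}

/-- `W` is a section of `⟨S⟩`: every congruence class meets `W` in exactly one element. -/
def IsSection {X : Type} (S : Set (M X × M X)) (W : Set (M X)) : Prop :=
  ∀ a : M X, ∃! w, w ∈ W ∧ (a, w) ∈ ocong S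

/-- Separated placements `(u₁,q₁)`, `(u₂,q₂)` in `w`. -/
def Separated {X : Type} (u₁ : M X) (q₁ : M (Option X)) (u₂ : M X) (q₂ : M (Option X))
    (w : M X) : Prop :=
  ∃ p, IsStar2 p ∧ q₁ = sub2R p u₂ ∧ q₂ = sub2L p u₁ ∧ w = sub2 p u₁ u₂

/-- Nested placements: one context is a subcontext of the other. -/
def Nested {X : Type} (q₁ q₂ : M (Option X)) : Prop :=
  ∃ q, IsStar q ∧ (q₂ = subS q₁ q ∨ q₁ = subS q₂ q)

/-- Intersecting placements `(u₁,q₁)`, `(u₂,q₂)` in `w`. -/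
def Intersecting {X : Type} (w u₁ : M X) (q₁ : M (Option X)) (u₂ : M X)
    (q₂ : M (Option X)) : Prop :=
  ∃ q a b c, IsStar q ∧ a ≠ ([] : M X) ∧ b ≠ ([] : M X) ∧ c ≠ ([] : M X) ∧
    w = sub q (a ++ b ++ c) ∧
    ((q₁ = subS q (starW ++ emb c) ∧ q₂ = subS q (emb a ++ starW)) ∨
     (q₁ = subS q (emb a ++ starW) ∧ q₂ = subS q (starW ++ emb c)))

/-- Defining relations of the free `∗`-monoid. -/
def SStar (X : Type) : Set (M X × M X) :=
  {p | (∃ w : M X, p = (L (L w), w)) ∨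
       (∃ u v : M X, u ≠ [] ∧ v ≠ [] ∧ p = (L (u ++ v), L v ++ L u)) ∨
       p = (L [], [])}

/-- Defining relations of the free group. -/
def SGrp (X : Type) : Set (M X × M X) :=
  {p | (∃ w : M X, p = (L (L w), w)) ∨
       (∃ u v : M X, u ≠ [] ∧ v ≠ [] ∧ p = (L (u ++ v), L v ++ L u)) ∨
       (∃ w : M X, p = (L w ++ w, [])) ∨
       (∃ w : M X, p = (w ++ L w, []))}


section AuxProof

open Letter

/-! ### Evaluation into the free group -/

mutual
  /-- Evaluate a letter in the free group. -/
  def evL {X : Type} : Letter X → FreeGroup X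
    | .of x => FreeGroup.of x
    | .br w => (evW w)⁻¹
  /-- Evaluate a word in the free group. -/
  def evW {X : Type} : M X → FreeGroup X
    | [] => 1
    | a :: as => evL a * evW as
end

theorem evW_append {X : Type} (u v : M X) : evW (u ++ v) = evW u * evW v := by
  induction u with
  | nil => simp [evW]
  | cons a as ih => simp [evW, ih, mul_assoc]

theorem evW_L {X : Type} (w : M X) : evW (L w) = (evW w)⁻¹ := by
  simp [L, evW, evL]

mutual
  theorem ev_bind_congrL {Y Z : Type} (f g : Y → M Z) (h : ∀ y, evW (f y) = evW (g y)) :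
      ∀ l : Letter Y, evW (bindL l f) = evW (bindL l g)
    | .of y => h y
    | .br w => by
        rw [bindL, bindL]
        simp only [evW, evL, mul_one]
        rw [ev_bind_congrW f g h w]
  theorem ev_bind_congrW {Y Z : Type} (f g : Y → M Z) (h : ∀ y, evW (f y) = evW (g y)) :
      ∀ w : M Y, evW (bindW w f) = evW (bindW w g)
    | [] => rfl
    | a :: as => by
        rw [bindW, bindW, evW_append, evW_append, ev_bind_congrL f g h a,
          ev_bind_congrW f g h as]
end

theorem ev_sub_congr {X : Type} (q : M (Option X)) {a b : M X} (h : evW a = evW b) :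
    evW (sub q a) = evW (sub q b) := by
  unfold sub
  refine ev_bind_congrW _ _ ?_ q
  rintro (_ | y)
  · exact h
  · rfl

theorem ev_SGrp {X : Type} {t v : M X} (h : (t, v) ∈ SGrp X) : evW t = evW v := by
  rcases h with ⟨w, hw⟩ | ⟨u, v', hu, hv, hw⟩ | ⟨w, hw⟩ | ⟨w, hw⟩ <;>
    simp only [Prod.mk.injEq] at hw
  · obtain ⟨rfl, rfl⟩ := Prod.mk.injEq .. ▸ hw
    rw [evW_L, evW_L, inv_inv]
  · obtain ⟨rfl, rfl⟩ := Prod.mk.injEq .. ▸ hw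
    rw [evW_L, evW_append, evW_append, evW_L, evW_L, mul_inv_rev]
  · obtain ⟨rfl, rfl⟩ := Prod.mk.injEq .. ▸ hw
    rw [evW_append, evW_L, inv_mul_cancel]; rfl
  · obtain ⟨rfl, rfl⟩ := Prod.mk.injEq .. ▸ hw
    rw [evW_append, evW_L, mul_inv_cancel]; rfl

/-! ### The congruence and evaluation -/

theorem isOpCong_ocong {X : Type} (R : Set (M X × M X)) : IsOpCong (ocong R) := by
  refine ⟨?_, ?_, ?_, ?_⟩
  · intro a T hT; exact hT.1.1 a
  · intro a b h T hT; exact hT.1.2.1 a b (h T hT)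
  · intro a b c h1 h2 T hT; exact hT.1.2.2.1 a b c (h1 T hT) (h2 T hT)
  · intro a b h c
    refine ⟨fun T hT => (hT.1.2.2.2 a b (h T hT) c).1,
      fun T hT => (hT.1.2.2.2 a b (h T hT) c).2.1,
      fun T hT => (hT.1.2.2.2 a b (h T hT) c).2.2⟩

theorem subset_ocong {X : Type} (R : Set (M X × M X)) : R ⊆ ocong R :=
  fun p hp T hT => hT.2 hp

theorem ocong_sub_ker {X : Type} {a b : M X} (h : (a, b) ∈ ocong (SGrp X)) :
    evW a = evW b := by
  have := h {p | evW p.1 = evW p.2} ?_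
  · exact this
  constructor
  · refine ⟨fun a => rfl, fun a b h => h.symm, fun a b c h1 h2 => h1.trans h2, ?_⟩
    intro a b h c
    refine ⟨?_, ?_, ?_⟩
    · show evW (a ++ c) = evW (b ++ c); rw [evW_append, evW_append, h]
    · show evW (c ++ a) = evW (c ++ b); rw [evW_append, evW_append, h]
    · show evW (L a) = evW (L b); rw [evW_L, evW_L, h]
  · intro p hp
    show evW p.1 = evW p.2
    obtain ⟨t, v⟩ := p
    exact ev_SGrp hp

mutual
  theorem ocong_bindL {X : Type} {a b : M X} (h : (a, b) ∈ ocong (SGrp X)) :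
      ∀ l : Letter (Option X),
        (bindL l (fun o => Option.elim o a (fun x => [Letter.of x])),
         bindL l (fun o => Option.elim o b (fun x => [Letter.of x]))) ∈ ocong (SGrp X)
    | .of none => h
    | .of (some _) => (isOpCong_ocong (SGrp X)).1 _
    | .br w => by
        have hw := ocong_bindW h w
        have := ((isOpCong_ocong (SGrp X)).2.2.2 _ _ hw []).2.2
        simpa [bindL, L] using this
  theorem ocong_bindW {X : Type} {a b : M X} (h : (a, b) ∈ ocong (SGrp X)) :
      ∀ w : M (Option X),
        (bindW w (fun o => Option.elim o a (fun x => [Letter.of x])),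
         bindW w (fun o => Option.elim o b (fun x => [Letter.of x]))) ∈ ocong (SGrp X)
    | [] => (isOpCong_ocong (SGrp X)).1 _
    | l :: rest => by
        have h1 := ocong_bindL h l
        have h2 := ocong_bindW h rest
        have C := isOpCong_ocong (SGrp X)
        have s1 := (C.2.2.2 _ _ h1 (bindW rest (fun o => Option.elim o a (fun x => [Letter.of x])))).1
        have s2 := (C.2.2.2 _ _ h2 (bindL l (fun o => Option.elim o b (fun x => [Letter.of x])))).2.1
        exact C.2.2.1 _ _ _ s1 s2

theorem ocong_sub {X : Type} {a b : M X} (h : (a, b) ∈ ocong (SGrp X)) (q : M (Option X)) :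
    (sub q a, sub q b) ∈ ocong (SGrp X) :=
  ocong_bindW h q

end

/-! ### Counting and substitution computations -/

theorem cntW_append {Y : Type} (p : Y → Bool) (u v : M Y) :
    cntW p (u ++ v) = cntW p u + cntW p v := by
  induction u with
  | nil => simp [cntW]
  | cons a as ih => simp [cntW, ih]; omega

theorem bindW_append {Y Z : Type} (u v : M Y) (f : Y → M Z) :
    bindW (u ++ v) f = bindW u f ++ bindW v f := by
  induction u with
  | nil => simp [bindW]
  | cons a as ih => simp [bindW, ih]

mutual
  theorem sub_embL {X : Type} (u : M X) :
      ∀ l : Letter X,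
        bindW (bindL l (fun x => [Letter.of (some x)]))
          (fun o => Option.elim o u (fun x => [Letter.of x])) = [l]
    | .of x => by simp [bindL, bindW]
    | .br w => by
        rw [bindL]
        show bindL _ _ ++ bindW [] _ = _
        rw [bindL, bindW]
        rw [sub_embW u w]
        simp
  theorem sub_embW {X : Type} (u : M X) :
      ∀ w : M X,
        bindW (bindW w (fun x => [Letter.of (some x)]))
          (fun o => Option.elim o u (fun x => [Letter.of x])) = w
    | [] => rfl
    | a :: as => by
        rw [bindW, bindW_append, sub_embL u a, sub_embW u as]
        rfl
end

theorem sub_emb {X : Type} (w u : M X) : sub (emb w) u = w := sub_embW u w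

mutual
  theorem cnt_embL {X : Type} :
      ∀ l : Letter X, cntW (fun o => Option.isNone o) (bindL l (fun x => [Letter.of (some x)])) = 0
    | .of x => by simp [bindL, cntW, cntL]
    | .br w => by
        rw [bindL]
        show cntL _ _ + cntW _ [] = 0
        rw [cntL, cntW]
        rw [cnt_embW w]
  theorem cnt_embW {X : Type} :
      ∀ w : M X, cntW (fun o => Option.isNone o) (bindW w (fun x => [Letter.of (some x)])) = 0
    | [] => rfl
    | a :: as => by
        rw [bindW, cntW_append, cnt_embL a, cnt_embW as]
end

theorem cnt_emb {X : Type} (w : M X) : cntW (fun o => Option.isNone o) (emb w) = 0 :=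
  cnt_embW w

theorem sub_append {X : Type} (q r : M (Option X)) (u : M X) :
    sub (q ++ r) u = sub q u ++ sub r u := bindW_append q r _

theorem sub_starW {X : Type} (u : M X) : sub starW u = u := by
  show u ++ bindW [] _ = u
  simp [bindW]

theorem isStar_ctx {X : Type} (w₁ w₂ : M X) : IsStar (emb w₁ ++ starW ++ emb w₂) := by
  unfold IsStar
  rw [cntW_append, cntW_append, cnt_emb, cnt_emb]
  rfl

theorem sub_ctx {X : Type} (w₁ w₂ t : M X) :
    sub (emb w₁ ++ starW ++ emb w₂) t = w₁ ++ t ++ w₂ := by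
  rw [sub_append, sub_append, sub_emb, sub_emb, sub_starW]
/-! ### Monotonicity and termination -/

mutual
  theorem subindL {X : Type} (u v : M X) :
      ∀ l : Letter (Option X), cntL (fun o => Option.isNone o) l = 0 →
        bindL l (fun o => Option.elim o u (fun x => [Letter.of x])) =
        bindL l (fun o => Option.elim o v (fun x => [Letter.of x]))
    | .of none, h => by simp [cntL] at h
    | .of (some x), _ => rfl
    | .br w, h => by
        rw [bindL, bindL, subindW u v w (by simpa [cntL] using h)]
  theorem subindW {X : Type} (u v : M X) :
      ∀ w : M (Option X), cntW (fun o => Option.isNone o) w = 0 →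
        bindW w (fun o => Option.elim o u (fun x => [Letter.of x])) =
        bindW w (fun o => Option.elim o v (fun x => [Letter.of x]))
    | [], _ => rfl
    | l :: rest, h => by
        rw [cntW] at h
        rw [bindW, bindW, subindL u v l (by omega), subindW u v rest (by omega)]
end

mutual
  theorem monoL {X : Type} {lt : M X → M X → Prop} (hlt : IsMonomialOrder lt)
      {u v : M X} (huv : lt u v) :
      ∀ l : Letter (Option X), cntL (fun o => Option.isNone o) l = 1 →
        lt (bindL l (fun o => Option.elim o u (fun x => [Letter.of x])))
           (bindL l (fun o => Option.elim o v (fun x => [Letter.of x])))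
    | .of none, _ => huv
    | .of (some x), h => by simp [cntL] at h
    | .br w, h => by
        rw [bindL, bindL]
        exact (hlt.2.2.2 _ _ [] (monoW hlt huv w (by simpa [cntL] using h))).2.2
  theorem monoW {X : Type} {lt : M X → M X → Prop} (hlt : IsMonomialOrder lt)
      {u v : M X} (huv : lt u v) :
      ∀ w : M (Option X), cntW (fun o => Option.isNone o) w = 1 →
        lt (bindW w (fun o => Option.elim o u (fun x => [Letter.of x])))
           (bindW w (fun o => Option.elim o v (fun x => [Letter.of x])))
    | [], h => by simp [cntW] at h
    | l :: rest, h => by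
        rw [cntW] at h
        rw [bindW, bindW]
        rcases (by omega : cntL (fun o => Option.isNone o) l = 1 ∧
            cntW (fun o => Option.isNone o) rest = 0 ∨
            cntL (fun o => Option.isNone o) l = 0 ∧
            cntW (fun o => Option.isNone o) rest = 1) with ⟨h1, h2⟩ | ⟨h1, h2⟩
        · rw [subindW u v rest h2]
          exact (hlt.2.2.2 _ _ _ (monoL hlt huv l h1)).1
        · rw [subindL u v l h1]
          exact (hlt.2.2.2 _ _ _ (monoW hlt huv rest h2)).2.1
end

theorem rew_elim {X : Type} {lt : M X → M X → Prop} (hlt : IsMonomialOrder lt)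
    (hor : ∀ p ∈ SGrp X, lt p.2 p.1) {a b : M X} (h : Rew lt (SGrp X) a b) :
    ∃ q t v, IsStar q ∧ (t, v) ∈ SGrp X ∧ lt v t ∧ a = sub q t ∧ b = sub q v := by
  obtain ⟨q, t, v, hq, hmem, hvt, heq⟩ := h
  rw [Prod.mk.injEq] at heq
  obtain ⟨ha, hb⟩ := heq
  rcases hmem with hmem | hmem
  · exact ⟨q, t, v, hq, hmem, hvt, ha, hb⟩
  · exact absurd hvt (hlt.1.asymmetric _ _ (hor _ hmem))

theorem rew_lt {X : Type} {lt : M X → M X → Prop} (hlt : IsMonomialOrder lt)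
    (hor : ∀ p ∈ SGrp X, lt p.2 p.1) {a b : M X} (h : Rew lt (SGrp X) a b) : lt b a := by
  obtain ⟨q, t, v, hq, _, hvt, rfl, rfl⟩ := rew_elim hlt hor h
  exact monoW hlt hvt q hq

theorem terminating {X : Type} {lt : M X → M X → Prop} (hlt : IsMonomialOrder lt)
    (hor : ∀ p ∈ SGrp X, lt p.2 p.1) : Terminating lt (SGrp X) := by
  rintro ⟨f, hf⟩
  have hdesc : ∀ n, lt (f (n + 1)) (f n) := fun n => rew_lt hlt hor (hf n)
  have key : ∀ a n, f n ≠ a := fun a =>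
    hlt.1.induction (C := fun a => ∀ n, f n ≠ a) a
      (fun a IH n hn => IH (f (n + 1)) (hn ▸ hdesc n) (n + 1) rfl)
  exact key (f 0) 0 rfl

theorem exists_nf {X : Type} {lt : M X → M X → Prop} (hlt : IsMonomialOrder lt)
    (hor : ∀ p ∈ SGrp X, lt p.2 p.1) (a : M X) :
    ∃ w, w ∈ Irr lt (SGrp X) ∧ Relation.ReflTransGen (Rew lt (SGrp X)) a w := by
  induction a using hlt.1.induction with
  | _ a IH =>
    by_cases h : ∃ b, Rew lt (SGrp X) a b
    · obtain ⟨b, hb⟩ := h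
      obtain ⟨w, hw, hr⟩ := IH b (rew_lt hlt hor hb)
      exact ⟨w, hw, Relation.ReflTransGen.head hb hr⟩
    · exact ⟨a, fun g hg => h ⟨g, hg⟩, Relation.ReflTransGen.refl⟩

theorem rew_ocong {X : Type} {lt : M X → M X → Prop} (hlt : IsMonomialOrder lt)
    (hor : ∀ p ∈ SGrp X, lt p.2 p.1) {a b : M X} (h : Rew lt (SGrp X) a b) :
    (a, b) ∈ ocong (SGrp X) := by
  obtain ⟨q, t, v, _, hmem, _, rfl, rfl⟩ := rew_elim hlt hor h
  exact ocong_sub (subset_ocong _ hmem) q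

theorem rtg_ocong {X : Type} {lt : M X → M X → Prop} (hlt : IsMonomialOrder lt)
    (hor : ∀ p ∈ SGrp X, lt p.2 p.1) {a b : M X}
    (h : Relation.ReflTransGen (Rew lt (SGrp X)) a b) : (a, b) ∈ ocong (SGrp X) := by
  induction h with
  | refl => exact (isOpCong_ocong _).1 a
  | tail _ hbc IH => exact (isOpCong_ocong _).2.2.1 _ _ _ IH (rew_ocong hlt hor hbc)

theorem ev_rew {X : Type} {lt : M X → M X → Prop} (hlt : IsMonomialOrder lt)
    (hor : ∀ p ∈ SGrp X, lt p.2 p.1) {a b : M X} (h : Rew lt (SGrp X) a b) :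
    evW a = evW b := by
  obtain ⟨q, t, v, _, hmem, _, rfl, rfl⟩ := rew_elim hlt hor h
  exact ev_sub_congr q (ev_SGrp hmem)

theorem ev_rtg {X : Type} {lt : M X → M X → Prop} (hlt : IsMonomialOrder lt)
    (hor : ∀ p ∈ SGrp X, lt p.2 p.1) {a b : M X}
    (h : Relation.ReflTransGen (Rew lt (SGrp X)) a b) : evW a = evW b := by
  induction h with
  | refl => rfl
  | tail _ hbc IH => exact IH.trans (ev_rew hlt hor hbc)

theorem mkRew {X : Type} {lt : M X → M X → Prop}
    (hor : ∀ p ∈ SGrp X, lt p.2 p.1) (w₁ w₂ t v : M X) (h : (t, v) ∈ SGrp X) :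
    Rew lt (SGrp X) (w₁ ++ t ++ w₂) (w₁ ++ v ++ w₂) :=
  ⟨emb w₁ ++ starW ++ emb w₂, t, v, isStar_ctx w₁ w₂, Or.inl h, hor _ h,
    by rw [sub_ctx, sub_ctx]⟩
/-! ### Irreducible words are reduced group words -/

/-- Letters allowed in a reduced word. -/
def GoodL {X : Type} (l : Letter X) : Prop :=
  ∃ x, l = Letter.of x ∨ l = Letter.br [Letter.of x]

/-- Adjacent letters that cancel. -/
def Cancels {X : Type} (a b : Letter X) : Prop :=
  ∃ x, (a = Letter.of x ∧ b = Letter.br [Letter.of x]) ∨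
       (a = Letter.br [Letter.of x] ∧ b = Letter.of x)

theorem irr_good {X : Type} {lt : M X → M X → Prop}
    (hor : ∀ p ∈ SGrp X, lt p.2 p.1) {w : M X} (hw : w ∈ Irr lt (SGrp X)) :
    ∀ l ∈ w, GoodL l := by
  intro l hl
  obtain ⟨w₁, w₂, hdec⟩ := List.append_of_mem hl
  have key : ∀ t v : M X, (t, v) ∈ SGrp X → t = [l] → False := by
    intro t v hmem ht
    refine hw (w₁ ++ v ++ w₂) ?_
    have := mkRew hor w₁ w₂ t v hmem
    rwa [ht, show w₁ ++ [l] ++ w₂ = w₁ ++ l :: w₂ by simp, ← hdec] at this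
  cases l with
  | of x => exact ⟨x, Or.inl rfl⟩
  | br u =>
    cases u with
    | nil =>
      exact absurd (key (L [] ++ []) [] (Or.inr (Or.inr (Or.inl ⟨[], rfl⟩))) rfl) not_false
    | cons a u' =>
      cases u' with
      | nil =>
        cases a with
        | of x => exact ⟨x, Or.inr rfl⟩
        | br u'' =>
          exact absurd (key (L (L u'')) u'' (Or.inl ⟨u'', rfl⟩) rfl) not_false
      | cons b rest =>
        refine absurd (key (L ([a] ++ b :: rest)) (L (b :: rest) ++ L [a])
          (Or.inr (Or.inl ⟨[a], b :: rest, by simp, by simp, rfl⟩)) rfl) not_false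

theorem not_chain'_decomp {α : Type} (P : α → α → Prop) :
    ∀ l : List α, ¬ List.Chain' P l → ∃ l₁ a b l₂, l = l₁ ++ a :: b :: l₂ ∧ ¬ P a b
  | [], h => absurd List.isChain_nil h
  | [a], h => absurd (List.isChain_singleton a) h
  | a :: b :: rest, h => by
    rw [List.Chain', List.isChain_cons_cons] at h
    by_cases hp : P a b
    · have h2 : ¬ List.Chain' P (b :: rest) := fun hc => h ⟨hp, hc⟩
      obtain ⟨l₁, c, d, l₂, hdec, hcd⟩ := not_chain'_decomp P (b :: rest) h2
      exact ⟨a :: l₁, c, d, l₂, by rw [List.cons_append, hdec], hcd⟩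
    · exact ⟨[], a, b, rest, rfl, hp⟩

theorem irr_chain {X : Type} {lt : M X → M X → Prop}
    (hor : ∀ p ∈ SGrp X, lt p.2 p.1) {w : M X} (hw : w ∈ Irr lt (SGrp X)) :
    List.Chain' (fun a b => ¬ Cancels a b) w := by
  by_contra hc
  obtain ⟨w₁, a, b, w₂, hdec, hab⟩ := not_chain'_decomp _ w hc
  rw [not_not] at hab
  obtain ⟨x, ⟨rfl, rfl⟩ | ⟨rfl, rfl⟩⟩ := hab
  · refine hw (w₁ ++ [] ++ w₂) ?_
    have := mkRew hor w₁ w₂ ([Letter.of x] ++ L [Letter.of x]) []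
      (Or.inr (Or.inr (Or.inr ⟨[Letter.of x], rfl⟩))) 
    rwa [show w₁ ++ ([Letter.of x] ++ L [Letter.of x]) ++ w₂ =
      w₁ ++ Letter.of x :: Letter.br [Letter.of x] :: w₂ by simp [L], ← hdec] at this
  · refine hw (w₁ ++ [] ++ w₂) ?_
    have := mkRew hor w₁ w₂ (L [Letter.of x] ++ [Letter.of x]) []
      (Or.inr (Or.inr (Or.inl ⟨[Letter.of x], rfl⟩)))
    rwa [show w₁ ++ (L [Letter.of x] ++ [Letter.of x]) ++ w₂ =
      w₁ ++ Letter.br [Letter.of x] :: Letter.of x :: w₂ by simp [L], ← hdec] at this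
/-! ### Reduced words embed injectively into the free group -/

/-- Convert a reduced word to a list of signed generators. -/
def toPairs {X : Type} : M X → List (X × Bool)
  | [] => []
  | Letter.of x :: rest => (x, true) :: toPairs rest
  | Letter.br [Letter.of x] :: rest => (x, false) :: toPairs rest
  | Letter.br _ :: rest => toPairs rest

/-- Convert a list of signed generators back to a word. -/
def fromPairs {X : Type} : List (X × Bool) → M X
  | [] => []
  | (x, true) :: r => Letter.of x :: fromPairs r
  | (x, false) :: r => Letter.br [Letter.of x] :: fromPairs r

theorem from_to {X : Type} : ∀ {w : M X}, (∀ l ∈ w, GoodL l) → fromPairs (toPairs w) = w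
  | [], _ => rfl
  | l :: rest, h => by
    have hrest := from_to (fun l' hl' => h l' (List.mem_cons_of_mem _ hl'))
    obtain ⟨x, rfl | rfl⟩ := h l (List.mem_cons_self)
    · show Letter.of x :: fromPairs (toPairs rest) = _
      rw [hrest]
    · show Letter.br [Letter.of x] :: fromPairs (toPairs rest) = _
      rw [hrest]

theorem ev_toPairs {X : Type} : ∀ {w : M X}, (∀ l ∈ w, GoodL l) →
    evW w = FreeGroup.mk (toPairs w)
  | [], _ => FreeGroup.one_eq_mk
  | l :: rest, h => by
    have hrest := ev_toPairs (fun l' hl' => h l' (List.mem_cons_of_mem _ hl'))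
    obtain ⟨x, rfl | rfl⟩ := h l (List.mem_cons_self)
    · show evW (Letter.of x :: rest) = FreeGroup.mk ((x, true) :: toPairs rest)
      rw [evW, evL, hrest, show FreeGroup.of x = FreeGroup.mk [(x, true)] from rfl,
        FreeGroup.mul_mk]
      rfl
    · show evW (Letter.br [Letter.of x] :: rest) = FreeGroup.mk ((x, false) :: toPairs rest)
      rw [evW, evL, hrest]
      have h1 : evW [Letter.of x] = FreeGroup.mk [(x, true)] := by
        rw [evW, evL, evW, show FreeGroup.of x = FreeGroup.mk [(x, true)] from rfl, mul_one]
      rw [h1, FreeGroup.inv_mk, show FreeGroup.invRev [(x, true)] = [(x, false)] from rfl,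
        FreeGroup.mul_mk]
      rfl

theorem chain'_toPairs {X : Type} : ∀ {w : M X}, (∀ l ∈ w, GoodL l) →
    List.Chain' (fun a b => ¬ Cancels a b) w →
    List.Chain' (fun p q : X × Bool => ¬(p.1 = q.1 ∧ q.2 = !p.2)) (toPairs w)
  | [], _, _ => List.isChain_nil
  | [l], h, _ => by
    obtain ⟨x, rfl | rfl⟩ := h l (List.mem_cons_self)
    · exact List.isChain_singleton _
    · exact List.isChain_singleton _
  | l₁ :: l₂ :: rest, h, hc => by
    rw [List.Chain', List.isChain_cons_cons] at hc
    have ih := chain'_toPairs (fun l' hl' => h l' (List.mem_cons_of_mem _ hl')) hc.2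
    have h1 := h l₁ (List.mem_cons_self)
    have h2 := h l₂ (List.mem_cons_of_mem _ (List.mem_cons_self))
    obtain ⟨x, rfl | rfl⟩ := h1 <;> obtain ⟨y, rfl | rfl⟩ := h2
    · exact List.isChain_cons_cons.mpr ⟨fun hh => by simp at hh, ih⟩
    · refine List.isChain_cons_cons.mpr ⟨fun hh => ?_, ih⟩
      have hxy : x = y := by simpa using hh.1
      exact hc.1 ⟨x, Or.inl ⟨rfl, by rw [hxy]⟩⟩
    · refine List.isChain_cons_cons.mpr ⟨fun hh => ?_, ih⟩
      have hxy : x = y := by simpa using hh.1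
      exact hc.1 ⟨x, Or.inr ⟨rfl, by rw [hxy]⟩⟩
    · exact List.isChain_cons_cons.mpr ⟨fun hh => by simp at hh, ih⟩

theorem chain'_middle {α : Type} {P : α → α → Prop} {a b : α} {L₂ : List α} :
    ∀ L₁ : List α, List.Chain' P (L₁ ++ a :: b :: L₂) → P a b
  | [], h => (List.isChain_cons_cons.mp h).1
  | _ :: t, h => chain'_middle t h.tail

theorem no_step {X : Type} {T : List (X × Bool)}
    (h : List.Chain' (fun p q : X × Bool => ¬(p.1 = q.1 ∧ q.2 = !p.2)) T)
    {c : List (X × Bool)} (hs : FreeGroup.Red.Step T c) : False := by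
  cases hs with
  | @not L₁ L₂ x b => exact chain'_middle L₁ h ⟨rfl, rfl⟩

theorem red_eq_of_irred {X : Type} {T c : List (X × Bool)}
    (h : FreeGroup.Red T c)
    (hT : List.Chain' (fun p q : X × Bool => ¬(p.1 = q.1 ∧ q.2 = !p.2)) T) : T = c := by
  rcases Relation.ReflTransGen.cases_head h with rfl | ⟨d, hd, _⟩
  · rfl
  · exact absurd hd (fun hs => no_step hT hs)

theorem irr_inj {X : Type} {lt : M X → M X → Prop}
    (hor : ∀ p ∈ SGrp X, lt p.2 p.1) {w₁ w₂ : M X}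
    (h₁ : w₁ ∈ Irr lt (SGrp X)) (h₂ : w₂ ∈ Irr lt (SGrp X))
    (he : evW w₁ = evW w₂) : w₁ = w₂ := by
  have g₁ := irr_good hor h₁
  have g₂ := irr_good hor h₂
  have c₁ := chain'_toPairs g₁ (irr_chain hor h₁)
  have c₂ := chain'_toPairs g₂ (irr_chain hor h₂)
  have hmk : FreeGroup.mk (toPairs w₁) = FreeGroup.mk (toPairs w₂) := by
    rw [← ev_toPairs g₁, ← ev_toPairs g₂, he]
  obtain ⟨c, r₁, r₂⟩ := FreeGroup.Red.exact.mp hmk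
  have e₁ := red_eq_of_irred r₁ c₁
  have e₂ := red_eq_of_irred r₂ c₂
  have : toPairs w₁ = toPairs w₂ := e₁.trans e₂.symm
  rw [← from_to g₁, ← from_to g₂, this]

end AuxProof

/-- `Π_S` for the group relations is convergent and `Irr(S)` is a
section of the free group `𝔐(X)/⟨S⟩`. -/
theorem sgrp_convergent_section (X : Type) (lt : M X → M X → Prop)
    (hlt : IsMonomialOrder lt) (hor : ∀ p ∈ SGrp X, lt p.2 p.1) :
    (Terminating lt (SGrp X) ∧ Confluent lt (SGrp X)) ∧
    IsSection (SGrp X) (Irr lt (SGrp X)) := by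
  refine ⟨⟨terminating hlt hor, ?_⟩, ?_⟩
  · -- Confluence
    intro f g h hg hh
    obtain ⟨g', hg'I, hg'⟩ := exists_nf hlt hor g
    obtain ⟨h', hh'I, hh'⟩ := exists_nf hlt hor h
    have he : evW g' = evW h' := by
      have e1 := ev_rtg hlt hor hg
      have e2 := ev_rtg hlt hor hh
      have e3 := ev_rtg hlt hor hg'
      have e4 := ev_rtg hlt hor hh'
      rw [← e3, ← e1, e2, e4]
    have : g' = h' := irr_inj hor hg'I hh'I he
    exact ⟨g', hg', this ▸ hh'⟩
  · -- Section
    intro a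
    obtain ⟨w, hwI, hw⟩ := exists_nf hlt hor a
    refine ⟨w, ⟨hwI, rtg_ocong hlt hor hw⟩, ?_⟩
    rintro w' ⟨hw'I, hw'⟩
    refine irr_inj hor hw'I hwI ?_
    have e1 : evW a = evW w' := ocong_sub_ker hw'
    have e2 : evW a = evW w := ocong_sub_ker (rtg_ocong hlt hor hw)
    rw [← e1, e2]

end OpMon
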